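/- arXiv:2505.12608 — 3 statements merged into one kernel-verified Lean document; each statement's English description precedes it below -/
import Mathlib

section
/- Let G=(V,E) be a finite directed graph, let s ∈ V, and let f : E → ℝ≥0 be a flow such that every vertex v ≠ s satisfies (inflow at v) − (outflow at v) = 1, while s satisfies (outflow at s) − (inflow at s) = |V| − 1. Then in the underlying undirected graph restricted to edges with nonzero flow, every vertex is connected to s; in particular the region is connected. -/
/-- a flow with unit net inflow at every non-source vertex and
net outflow |V|-1 at the source connects every vertex to the source via
edges of nonzero flow (direction ignored). -/
theorem flow_contiguity {V : Type*} [Fintype V] (s : V) (f : V → V → ℝ)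
    (hnonneg : ∀ u v, 0 ≤ f u v)
    (hcons : ∀ v, v ≠ s → (∑ u, f u v) - (∑ u, f v u) = 1)
    (hsrc : (∑ u, f s u) - (∑ u, f u s) = (Fintype.card V : ℝ) - 1) :
    ∀ v : V, (SimpleGraph.fromRel (fun u w => 0 < f u w)).Reachable v s := by
  classical
  by_contra h
  push_neg at h
  set G := SimpleGraph.fromRel (fun u w => 0 < f u w) with hG
  obtain ⟨v₀, hv₀⟩ := h
  set T : Finset V := Finset.univ.filter (fun v => ¬ G.Reachable v s) with hTdef
  have hT : T.Nonempty := ⟨v₀, by simp [hTdef, hv₀]⟩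
  have hsT : s ∉ T := by simp [hTdef]
  have hcross : ∀ u ∈ T, ∀ v, v ∉ T → f u v = 0 ∧ f v u = 0 := by
    intro u hu v hv
    have huT : ¬ G.Reachable u s := by simpa [hTdef] using hu
    have hvR : G.Reachable v s := by simpa [hTdef] using hv
    have hne : u ≠ v := by rintro rfl; exact huT hvR
    constructor
    · by_contra hne'
      have hpos : 0 < f u v := lt_of_le_of_ne (hnonneg u v) (Ne.symm hne')
      have hadj : G.Adj u v := by simp [hG, SimpleGraph.fromRel_adj, hne, hpos]
      exact huT (hadj.reachable.trans hvR)
    · by_contra hne'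
      have hpos : 0 < f v u := lt_of_le_of_ne (hnonneg v u) (Ne.symm hne')
      have hadj : G.Adj u v := by simp [hG, SimpleGraph.fromRel_adj, hne, hpos]
      exact huT (hadj.reachable.trans hvR)
  have hsum : ∑ v ∈ T, ((∑ u, f u v) - (∑ u, f v u)) = (T.card : ℝ) := by
    rw [Finset.sum_congr rfl (fun v hv => hcons v (fun hvs => hsT (hvs ▸ hv)))]
    simp
  have hin : ∀ v ∈ T, (∑ u, f u v) = ∑ u ∈ T, f u v := by
    intro v hv
    rw [← Finset.sum_add_sum_compl T (fun u => f u v)]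
    have : ∑ u ∈ Tᶜ, f u v = 0 := by
      apply Finset.sum_eq_zero
      intro u hu
      exact (hcross v hv u (by simpa using hu)).2
    rw [this, add_zero]
  have hout : ∀ v ∈ T, (∑ u, f v u) = ∑ u ∈ T, f v u := by
    intro v hv
    rw [← Finset.sum_add_sum_compl T (fun u => f v u)]
    have : ∑ u ∈ Tᶜ, f v u = 0 := by
      apply Finset.sum_eq_zero
      intro u hu
      exact (hcross v hv u (by simpa using hu)).1
    rw [this, add_zero]
  have hzero : ∑ v ∈ T, ((∑ u, f u v) - (∑ u, f v u)) = 0 := by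
    rw [Finset.sum_congr rfl (fun v hv => by rw [hin v hv, hout v hv])]
    rw [Finset.sum_sub_distrib, Finset.sum_comm, sub_self]
  rw [hzero] at hsum
  have : 0 < T.card := Finset.card_pos.mpr hT
  have : (0:ℝ) < T.card := by exact_mod_cast this
  linarith [hsum]
end

section
/- Let G be a finite directed graph with vertex set V partitioned into regions by d : V → {1,…,p}, and suppose each flow variable f_{ij} is zero whenever d(i) ≠ d(j). If within a fixed region k (with root r) every non-root vertex has net inflow 1 (using only edges internal to the region, which is automatic since cross-region flows vanish), then every vertex of region k is connected to r within the subgraph induced by region k. -/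
/-- if cross-region flows vanish and every non-root vertex of
region k has net inflow 1, then every vertex of region k is connected to the
root within the subgraph induced by region k. -/
theorem region_flow_contiguity {V : Type*} [Fintype V] (p : ℕ)
    (d : V → Fin p) (k : Fin p) (r : V) (hr : d r = k)
    (f : V → V → ℝ) (hnonneg : ∀ u v, 0 ≤ f u v)
    (hcross : ∀ u v, d u ≠ d v → f u v = 0)
    (hcons : ∀ v, d v = k → v ≠ r → (∑ u, f u v) - (∑ u, f v u) = 1) :
    ∀ v, d v = k →
      (SimpleGraph.fromRel (fun u w => 0 < f u w ∧ d u = k ∧ d w = k)).Reachable v r := by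
  classical
  set G := SimpleGraph.fromRel (fun u w => 0 < f u w ∧ d u = k ∧ d w = k) with hG
  by_contra h
  push_neg at h
  obtain ⟨v0, hv0k, hv0⟩ := h
  set S : Finset V := Finset.univ.filter (fun v => d v = k ∧ ¬ G.Reachable v r) with hS
  have hv0S : v0 ∈ S := by simp [hS, hv0k, hv0]
  have hrS : r ∉ S := by
    simp only [hS, Finset.mem_filter, Finset.mem_univ, true_and, not_and, not_not]
    intro _; exact SimpleGraph.Reachable.refl r
  have hkey : ∀ u v, u ∉ S → v ∈ S → f u v = 0 := by
    intro u v hu hv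
    by_contra hne
    have hpos : 0 < f u v := lt_of_le_of_ne (hnonneg u v) (Ne.symm hne)
    have hv' := Finset.mem_filter.mp hv
    have hdv : d v = k := hv'.2.1
    have hdu : d u = k := by
      by_contra hduk
      exact hne (hcross u v (by rw [hdv]; exact hduk))
    apply hu
    by_cases heq : u = v
    · exact heq ▸ hv
    · have hadj : G.Adj u v := by
        rw [hG, SimpleGraph.fromRel_adj]
        exact ⟨heq, Or.inl ⟨hpos, hdu, hdv⟩⟩
      refine Finset.mem_filter.mpr ⟨Finset.mem_univ _, hdu, fun hr' => hv'.2.2 ?_⟩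
      exact hadj.symm.reachable.trans hr'
  have hterm : ∀ v ∈ S, ((∑ u, f u v) - (∑ u, f v u)) = 1 := by
    intro v hv
    have hv' := Finset.mem_filter.mp hv
    exact hcons v hv'.2.1 (fun h => hrS (h ▸ hv))
  have hsum : ∑ v ∈ S, ((∑ u, f u v) - (∑ u, f v u)) = (S.card : ℝ) := by
    rw [Finset.sum_congr rfl hterm]; simp
  have hin : ∀ v ∈ S, (∑ u, f u v) = ∑ u ∈ S, f u v := by
    intro v hv
    exact (Finset.sum_subset (Finset.subset_univ S)
      (fun u _ hu => hkey u v hu hv)).symm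
  have hout : ∀ v ∈ S, (∑ u ∈ S, f v u) ≤ ∑ u, f v u := by
    intro v _
    exact Finset.sum_le_sum_of_subset_of_nonneg (Finset.subset_univ S)
      (fun u _ _ => hnonneg v u)
  have hle : ∑ v ∈ S, ((∑ u, f u v) - (∑ u, f v u)) ≤ 0 := by
    calc ∑ v ∈ S, ((∑ u, f u v) - (∑ u, f v u))
        ≤ ∑ v ∈ S, ((∑ u ∈ S, f u v) - (∑ u ∈ S, f v u)) := by
          refine Finset.sum_le_sum (fun v hv => ?_)
          rw [hin v hv]
          exact sub_le_sub_left (hout v hv) _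
      _ = (∑ v ∈ S, ∑ u ∈ S, f u v) - (∑ v ∈ S, ∑ u ∈ S, f v u) := by
          rw [Finset.sum_sub_distrib]
      _ = 0 := by rw [Finset.sum_comm]; ring
  rw [hsum] at hle
  have : 0 < (S.card : ℝ) := by
    exact_mod_cast Finset.card_pos.mpr ⟨v0, hv0S⟩
  linarith
end

section
/- If a region r ⊆ V with designated root s admits a nonnegative flow f supported on edges internal to r such that each non-root vertex of r has net inflow 1 and s has net outflow |r| − 1, then the induced subgraph on r (with edges of positive flow, direction ignored) contains a spanning connected subgraph of r; in particular r has exactly one connected component. -/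
/-- a region carrying an internal flow with unit net inflow at
non-root vertices and net outflow |r|−1 at the root is connected (via
positive-flow edges, direction ignored). -/
theorem region_connected {V : Type*} [Fintype V] [DecidableEq V]
    (r : Finset V) (hne : r.Nonempty) (s : V) (hs : s ∈ r)
    (f : V → V → ℝ) (hnonneg : ∀ u v, 0 ≤ f u v)
    (hsupp : ∀ u v, f u v ≠ 0 → u ∈ r ∧ v ∈ r)
    (hcons : ∀ v ∈ r, v ≠ s → (∑ u, f u v) - (∑ u, f v u) = 1)
    (hsrc : (∑ u, f s u) - (∑ u, f u s) = (r.card : ℝ) - 1) :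
    ∀ u ∈ r, ∀ v ∈ r,
      (SimpleGraph.fromRel (fun a b => 0 < f a b ∧ a ∈ r ∧ b ∈ r)).Reachable u v := by
  classical
  set G := SimpleGraph.fromRel (fun a b => 0 < f a b ∧ a ∈ r ∧ b ∈ r) with hG
  have hadj : ∀ u v, f u v ≠ 0 → u ≠ v → G.Adj u v := by
    intro u v hf huv
    have hpos : 0 < f u v := lt_of_le_of_ne (hnonneg u v) (Ne.symm hf)
    obtain ⟨hur, hvr⟩ := hsupp u v hf
    exact (SimpleGraph.fromRel_adj _ u v).2 ⟨huv, Or.inl ⟨hpos, hur, hvr⟩⟩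
  have key : ∀ v ∈ r, G.Reachable s v := by
    by_contra h
    push_neg at h
    set S : Finset V := r.filter (fun v => ¬ G.Reachable s v) with hSdef
    have hSne : S.Nonempty := by
      obtain ⟨v, hv, hvr⟩ := h
      exact ⟨v, Finset.mem_filter.2 ⟨hv, hvr⟩⟩
    have hsS : s ∉ S := fun hsS => (Finset.mem_filter.1 hsS).2 (SimpleGraph.Reachable.refl s)
    have hzero : ∀ v ∈ S, ∀ u, u ∉ S → f u v = 0 ∧ f v u = 0 := by
      intro v hv u hu
      obtain ⟨hvr, hvnr⟩ := Finset.mem_filter.1 hv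
      have step : ∀ w z : V, z ∈ S → w ∉ S → f w z ≠ 0 → False := by
        intro w z hz hw hf
        obtain ⟨hzr, hznr⟩ := Finset.mem_filter.1 hz
        obtain ⟨hwr, _⟩ := hsupp w z hf
        by_cases hwz : w = z
        · exact hw (hwz ▸ hz)
        · have hadjwz := hadj w z hf hwz
          have hws : G.Reachable s w := by
            by_contra hnw
            exact hw (Finset.mem_filter.2 ⟨hwr, hnw⟩)
          exact hznr (hws.trans hadjwz.reachable)
      constructor
      · by_contra hf; exact step u v hv hu hf
      · by_contra hf
        obtain ⟨_, hur⟩ := hsupp v u hf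
        by_cases huv : u = v
        · exact hu (huv ▸ hv)
        · have hadjvu := hadj v u hf (Ne.symm huv)
          have hus : G.Reachable s u := by
            by_contra hnu
            exact hu (Finset.mem_filter.2 ⟨hur, hnu⟩)
          exact (Finset.mem_filter.1 hv).2 (hus.trans hadjvu.symm.reachable)
    have h1 : ∑ v ∈ S, ((∑ u, f u v) - (∑ u, f v u)) = (S.card : ℝ) := by
      rw [Finset.sum_congr rfl (fun v hv => hcons v (Finset.mem_filter.1 hv).1
        (fun hvs => hsS (hvs ▸ hv)))]
      simp
      rfl
    have hin : ∀ v ∈ S, (∑ u, f u v) = ∑ u ∈ S, f u v := by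
      intro v hv
      exact (Finset.sum_subset (Finset.subset_univ S)
        (fun u _ hu => (hzero v hv u hu).1)).symm
    have hout : ∀ v ∈ S, (∑ u, f v u) = ∑ u ∈ S, f v u := by
      intro v hv
      exact (Finset.sum_subset (Finset.subset_univ S)
        (fun u _ hu => (hzero v hv u hu).2)).symm
    have h2 : ∑ v ∈ S, ((∑ u, f u v) - (∑ u, f v u)) = 0 := by
      rw [Finset.sum_congr rfl (fun v hv => by rw [hin v hv, hout v hv])]
      rw [Finset.sum_sub_distrib, Finset.sum_comm]
      ring
    rw [h2] at h1
    have : S.card = 0 := by exact_mod_cast h1.symm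
    exact hSne.ne_empty (Finset.card_eq_zero.1 this)
  intro u hu v hv
  exact (key u hu).symm.trans (key v hv)
end
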